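/- Let A and B be bounded operators on a complex Hilbert space such that A is normal, AB is (p,k)-quasihyponormal for some 0 < p ≤ 1 and positive integer k, and B(AA*) = (AA*)B. Then BA is (p,k)-quasihyponormal. -/

import Mathlib

open ContinuousLinearMap
open scoped InnerProductSpace

variable {H : Type*} [NormedAddCommGroup H] [InnerProductSpace ℂ H] [CompleteSpace H]

lemma semiconj_aeval' (u a b : H →L[ℂ] H) (h : u * a = b * u) (q : Polynomial ℝ) :
    u * Polynomial.aeval a q = Polynomial.aeval b q * u := by
  induction q using Polynomial.induction_on with
  | C r => simp [Polynomial.aeval_C, Algebra.commutes, Algebra.algebraMap_eq_smul_one]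
  | add q1 q2 h1 h2 => simp [map_add, mul_add, add_mul, h1, h2]
  | monomial n r hn =>
      have hp := (SemiconjBy.pow_right h (n + 1)).eq
      simp only [map_mul, Polynomial.aeval_C, map_pow, Polynomial.aeval_X,
        Algebra.algebraMap_eq_smul_one]
      rw [smul_mul_assoc, smul_mul_assoc, one_mul, one_mul, mul_smul_comm, hp, smul_mul_assoc]

lemma intertwine_cfc' [Nontrivial H] (u a b : H →L[ℂ] H) (ha : IsSelfAdjoint a)
    (hb : IsSelfAdjoint b) (h : u * a = b * u) {f : ℝ → ℝ} (hf : Continuous f) :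
    u * cfc f a = cfc f b * u := by
  set M : ℝ := max ‖a‖ ‖b‖ with hM
  have hspa : spectrum ℝ a ⊆ Set.Icc (-M) M := by
    intro x hx
    have h1 := spectrum.norm_le_norm_of_mem hx
    rw [Real.norm_eq_abs, abs_le] at h1
    have h2 : ‖a‖ ≤ M := le_max_left _ _
    exact ⟨by linarith [h1.1], by linarith [h1.2]⟩
  have hspb : spectrum ℝ b ⊆ Set.Icc (-M) M := by
    intro x hx
    have h1 := spectrum.norm_le_norm_of_mem hx
    rw [Real.norm_eq_abs, abs_le] at h1
    have h2 : ‖b‖ ≤ M := le_max_right _ _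
    exact ⟨by linarith [h1.1], by linarith [h1.2]⟩
  rw [← sub_eq_zero, ← norm_le_zero_iff]
  apply le_of_forall_pos_le_add
  intro ε hε
  set δ : ℝ := ε / (2 * ‖u‖ + 2) with hδ
  have hδpos : 0 < δ := div_pos hε (by positivity)
  obtain ⟨q, hq⟩ := exists_polynomial_near_of_continuousOn (-M) M f hf.continuousOn δ hδpos
  have hqa : ‖cfc f a - Polynomial.aeval a q‖ ≤ δ := by
    rw [← cfc_polynomial q a ha, ← cfc_sub f q.eval a hf.continuousOn q.continuous.continuousOn]
    refine norm_cfc_le hδpos.le fun x hx => ?_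
    rw [Real.norm_eq_abs]
    have := hq x (hspa hx)
    rw [abs_sub_comm] at this
    exact this.le
  have hqb : ‖Polynomial.aeval b q - cfc f b‖ ≤ δ := by
    rw [← cfc_polynomial q b hb, ← cfc_sub q.eval f b q.continuous.continuousOn hf.continuousOn]
    refine norm_cfc_le hδpos.le fun x hx => ?_
    rw [Real.norm_eq_abs]
    exact (hq x (hspb hx)).le
  have hdecomp : u * cfc f a - cfc f b * u =
      u * (cfc f a - Polynomial.aeval a q) + (Polynomial.aeval b q - cfc f b) * u := by
    rw [mul_sub, sub_mul, semiconj_aeval' u a b h q]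
    abel
  rw [hdecomp, zero_add]
  calc ‖u * (cfc f a - Polynomial.aeval a q) + (Polynomial.aeval b q - cfc f b) * u‖
      ≤ ‖u * (cfc f a - Polynomial.aeval a q)‖ + ‖(Polynomial.aeval b q - cfc f b) * u‖ :=
        norm_add_le _ _
    _ ≤ ‖u‖ * δ + δ * ‖u‖ := by
        gcongr
        · exact (norm_mul_le _ _).trans (by gcongr)
        · exact (norm_mul_le _ _).trans (by gcongr)
    _ ≤ ε := by
        have h2 : (0:ℝ) < 2 * ‖u‖ + 2 := by positivity
        have h3 : δ * (2 * ‖u‖ + 2) = ε := by rw [hδ]; field_simp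
        nlinarith [hδpos.le, norm_nonneg u]

lemma orth_ker_eq_closure_range_adjoint (A : H →L[ℂ] H) :
    (LinearMap.ker (A : H →ₗ[ℂ] H))ᗮ = (LinearMap.range (adjoint A : H →L[ℂ] H).toLinearMap).topologicalClosure := by
  have h1 : (LinearMap.range (adjoint A : H →L[ℂ] H).toLinearMap)ᗮ = LinearMap.ker (A : H →ₗ[ℂ] H) := by
    ext x
    simp only [Submodule.mem_orthogonal, LinearMap.mem_range, LinearMap.mem_ker]
    constructor
    · intro h
      have := h (adjoint A (A x)) ⟨A x, rfl⟩
      rw [adjoint_inner_left] at this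
      exact inner_self_eq_zero.mp this
    · intro h u hu
      obtain ⟨y, rfl⟩ := hu
      rw [ContinuousLinearMap.coe_coe] at h
      rw [ContinuousLinearMap.coe_coe, adjoint_inner_left, h, inner_zero_right]
  rw [← h1, Submodule.orthogonal_orthogonal_eq_closure]

set_option maxHeartbeats 2000000 in
/-- A normal, AB (p,k)-quasihyponormal, B(AA*) = (AA*)B ⟹ BA is (p,k)-quasihyponormal. -/
theorem stmt13 (A B : H →L[ℂ] H) (p : ℝ) (hp0 : 0 < p) (hp1 : p ≤ 1)
    (k : ℕ) (hk : 0 < k)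
    (hA : adjoint A * A = A * adjoint A)
    (hAB : 0 ≤ (adjoint (A * B)) ^ k *
        (cfc (fun x : ℝ => x ^ p) (adjoint (A * B) * (A * B)) -
          cfc (fun x : ℝ => x ^ p) ((A * B) * adjoint (A * B))) * (A * B) ^ k)
    (hcomm : B * (A * adjoint A) = (A * adjoint A) * B) :
    0 ≤ (adjoint (B * A)) ^ k *
        (cfc (fun x : ℝ => x ^ p) (adjoint (B * A) * (B * A)) -
          cfc (fun x : ℝ => x ^ p) ((B * A) * adjoint (B * A))) * (B * A) ^ k := by
  rcases subsingleton_or_nontrivial H with htriv | hnt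
  · haveI : Subsingleton (H →L[ℂ] H) := by
      constructor; intro x y; ext v; exact Subsingleton.elim _ _
    exact le_of_eq (Subsingleton.elim _ _)
  -- nontrivial case
  simp only [← star_eq_adjoint] at hA hAB hcomm ⊢
  set f : ℝ → ℝ := fun x : ℝ => x ^ p with hfdef
  have hf : Continuous f := by
    rw [continuous_iff_continuousAt]
    exact fun x => Real.continuousAt_rpow_const x p (Or.inr hp0.le)
  set T : H →L[ℂ] H := B * A with hTdef
  set S : H →L[ℂ] H := A * B with hSdef
  -- basic star algebra
  have hCsa : star (A * star A) = A * star A := by rw [star_mul, star_star]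
  have hc' : (A * star A) * star B = star B * (A * star A) := by
    have h0 := congrArg star hcomm
    simp only [star_mul, star_star] at h0
    simpa [mul_assoc] using h0
  have h1 : A * T = S * A := (mul_assoc A B A).symm
  have h2 : A * star T = star S * A := by
    calc A * star T = A * (star A * star B) := by rw [hTdef, star_mul]
      _ = (A * star A) * star B := (mul_assoc _ _ _).symm
      _ = star B * (A * star A) := hc'
      _ = star B * (star A * A) := by rw [hA]
      _ = (star B * star A) * A := (mul_assoc _ _ _).symm
      _ = star S * A := by rw [hSdef, star_mul]
  have hT1 : A * (star T * T) = (star S * S) * A := by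
    rw [← mul_assoc, h2, mul_assoc, h1, ← mul_assoc]
  have hT2 : A * (T * star T) = (S * star S) * A := by
    rw [← mul_assoc, h1, mul_assoc, h2, ← mul_assoc]
  -- selfadjointness
  have saTT : IsSelfAdjoint (star T * T) := IsSelfAdjoint.of_nonneg (star_mul_self_nonneg T)
  have saTT' : IsSelfAdjoint (T * star T) := IsSelfAdjoint.of_nonneg (mul_star_self_nonneg T)
  have saSS : IsSelfAdjoint (star S * S) := IsSelfAdjoint.of_nonneg (star_mul_self_nonneg S)
  have saSS' : IsSelfAdjoint (S * star S) := IsSelfAdjoint.of_nonneg (mul_star_self_nonneg S)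
  set DT : H →L[ℂ] H := cfc f (star T * T) - cfc f (T * star T) with hDT
  set DS : H →L[ℂ] H := cfc f (star S * S) - cfc f (S * star S) with hDS
  have sa1 : IsSelfAdjoint (cfc f (star T * T)) := cfc_predicate f (star T * T)
  have sa2 : IsSelfAdjoint (cfc f (T * star T)) := cfc_predicate f (T * star T)
  have sa3 : IsSelfAdjoint (cfc f (star S * S)) := cfc_predicate f (star S * S)
  have sa4 : IsSelfAdjoint (cfc f (S * star S)) := cfc_predicate f (S * star S)
  have saDT : IsSelfAdjoint DT := sa1.sub sa2
  have saDS : IsSelfAdjoint DS := sa3.sub sa4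
  have hADT : A * DT = DS * A := by
    rw [hDT, hDS, mul_sub, sub_mul,
      intertwine_cfc' A _ _ saTT saSS hT1 hf, intertwine_cfc' A _ _ saTT' saSS' hT2 hf]
  have h5 : A * T ^ k = S ^ k * A := (SemiconjBy.pow_right h1 k).eq
  have h6 : A * (star T) ^ k = (star S) ^ k * A := (SemiconjBy.pow_right h2 k).eq
  set M : H →L[ℂ] H := (star T) ^ k * DT * T ^ k with hMdef
  set N : H →L[ℂ] H := (star S) ^ k * DS * S ^ k with hNdef
  have hN : 0 ≤ N := by
    simpa [hNdef, hDS, hSdef, star_pow] using hAB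
  have hMN : A * M = N * A := by
    rw [hMdef, hNdef, ← mul_assoc, ← mul_assoc, h6]
    rw [mul_assoc ((star S) ^ k) A DT, hADT, ← mul_assoc]
    rw [mul_assoc _ A (T ^ k), h5, ← mul_assoc]
  have saM : IsSelfAdjoint M := by
    rw [IsSelfAdjoint, hMdef]
    simp only [star_mul, star_pow, star_star, saDT.star_eq]
    rw [mul_assoc]
  have saN : IsSelfAdjoint N := by
    rw [IsSelfAdjoint, hNdef]
    simp only [star_mul, star_pow, star_star, saDS.star_eq]
    rw [mul_assoc]
  -- C and its commutation with N
  set C : H →L[ℂ] H := A * star A with hCdef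
  have hC0 : 0 ≤ C := mul_star_self_nonneg A
  have saC : IsSelfAdjoint C := IsSelfAdjoint.of_nonneg hC0
  have hCA : Commute C A := by
    show C * A = A * C
    conv_lhs => rw [hCdef]
    rw [mul_assoc, hA]
  have hCB : Commute C B := hcomm.symm
  have hCS : Commute C S := hCA.mul_right hCB
  have hCstarS : Commute C (star S) := by
    have := hCS.star_star
    rwa [saC.star_eq] at this
  have hCSS : Commute C (star S * S) := hCstarS.mul_right hCS
  have hCSS' : Commute C (S * star S) := hCS.mul_right hCstarS
  have hCcfc1 : Commute C (cfc f (star S * S)) :=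
    intertwine_cfc' C _ _ saSS saSS hCSS.eq hf
  have hCcfc2 : Commute C (cfc f (S * star S)) :=
    intertwine_cfc' C _ _ saSS' saSS' hCSS'.eq hf
  have hCDS : Commute C DS := by rw [hDS]; exact hCcfc1.sub_right hCcfc2
  have hCN : Commute C N := by
    rw [hNdef]
    exact ((hCstarS.pow_right k).mul_right hCDS).mul_right (hCS.pow_right k)
  -- square root of C
  set R : H →L[ℂ] H := cfc Real.sqrt C with hRdef
  have saR : IsSelfAdjoint R := cfc_predicate Real.sqrt C
  have hRR : R * R = C := by
    rw [hRdef, ← cfc_mul _ _ C Real.continuous_sqrt.continuousOn Real.continuous_sqrt.continuousOn]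
    have h2 : cfc (fun x => Real.sqrt x * Real.sqrt x) C = cfc (id : ℝ → ℝ) C := by
      apply cfc_congr
      intro x hx
      exact Real.mul_self_sqrt (spectrum_nonneg_of_nonneg hC0 hx)
    rw [h2, cfc_id ℝ C]
  have hNR : N * R = R * N := by
    rw [hRdef]
    exact intertwine_cfc' N C C saC saC hCN.symm.eq Real.continuous_sqrt
  -- M * star A = star A * N
  have hMadj : M * star A = star A * N := by
    have h0 := congrArg star hMN
    simp only [star_mul, saM.star_eq, saN.star_eq] at h0
    exact h0
  -- positivity pointwise
  have hNpos := (ContinuousLinearMap.nonneg_iff_isPositive N).mp hN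
  have hMsym' := isSelfAdjoint_iff_isSymmetric.mp saM
  have hRsym' := isSelfAdjoint_iff_isSymmetric.mp saR
  have hMsym : ∀ u v : H, (inner ℂ (M u) v : ℂ) = inner ℂ u (M v) := fun u v => hMsym' u v
  have hRsym : ∀ u v : H, (inner ℂ (R u) v : ℂ) = inner ℂ u (R v) := fun u v => hRsym' u v
  have hrange : ∀ y : H, 0 ≤ RCLike.re (inner ℂ (M (star A y)) (star A y) : ℂ) := by
    intro y
    have e1 : M (star A y) = star A (N y) := by
      calc M (star A y) = (M * star A) y := rfl
        _ = (star A * N) y := by rw [hMadj]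
        _ = star A (N y) := rfl
    have e3 : A (adjoint A y) = C y := by
      show A (adjoint A y) = (A * star A) y
      rw [star_eq_adjoint]
      rfl
    have e5 : R (N y) = N (R y) := by
      calc R (N y) = (R * N) y := rfl
        _ = (N * R) y := by rw [hNR]
        _ = N (R y) := rfl
    have e2 : (inner ℂ (M (star A y)) (star A y) : ℂ) = inner ℂ (N (R y)) (R y) := by
      calc (inner ℂ (M (star A y)) (star A y) : ℂ)
          = inner ℂ (star A (N y)) (star A y) := by rw [e1]
        _ = inner ℂ ((adjoint A) (N y)) ((adjoint A) y) := by rw [star_eq_adjoint]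
        _ = inner ℂ (N y) (A ((adjoint A) y)) := adjoint_inner_left A ((adjoint A) y) (N y)
        _ = inner ℂ (N y) (C y) := by rw [e3]
        _ = inner ℂ (N y) ((R * R) y) := by rw [hRR]
        _ = inner ℂ (N y) (R (R y)) := rfl
        _ = inner ℂ (R (N y)) (R y) := (hRsym (N y) (R y)).symm
        _ = inner ℂ (N (R y)) (R y) := by rw [e5]
    rw [e2]
    exact hNpos.re_inner_nonneg_left (R y)
  -- kernel
  have hker : ∀ z : H, A z = 0 → M z = 0 := by
    intro z hz
    obtain ⟨n, rfl⟩ := Nat.exists_eq_succ_of_ne_zero hk.ne'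
    have hTz : T z = 0 := by
      rw [hTdef]
      show B (A z) = 0
      rw [hz, map_zero]
    have hTkz : T ^ (n + 1) = T ^ n * T := pow_succ T n
    have hTk : (T ^ (n + 1)) z = 0 := by
      rw [hTkz]
      show (T ^ n) (T z) = 0
      rw [hTz, map_zero]
    show ((star T) ^ (n+1) * DT * T ^ (n+1)) z = 0
    rw [mul_assoc]
    show ((star T) ^ (n+1)) ((DT * T ^ (n+1)) z) = 0
    have : (DT * T ^ (n+1)) z = 0 := by
      show DT ((T ^ (n+1)) z) = 0
      rw [hTk, map_zero]
    rw [this, map_zero]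
  -- final assembly
  rw [ContinuousLinearMap.nonneg_iff_isPositive]
  refine ⟨saM.isSymmetric, fun x => ?_⟩
  rw [ContinuousLinearMap.reApplyInnerSelf_apply]
  haveI : CompleteSpace (LinearMap.ker (A : H →ₗ[ℂ] H)) := (ContinuousLinearMap.isComplete_ker A).completeSpace_coe
  obtain ⟨z, hz, w, hw, rfl⟩ := (LinearMap.ker (A : H →ₗ[ℂ] H)).exists_add_mem_mem_orthogonal x
  have hMz : M z = 0 := hker z (LinearMap.mem_ker.mp hz)
  have hsplit : RCLike.re (inner ℂ (M (z + w)) (z + w) : ℂ) =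
      RCLike.re (inner ℂ (M w) w : ℂ) := by
    rw [map_add, hMz, zero_add, inner_add_right, hMsym w z, hMz, inner_zero_right, zero_add]
  rw [hsplit]
  -- w in closure of range of adjoint
  have hwcl : w ∈ closure ((LinearMap.range (adjoint A : H →L[ℂ] H).toLinearMap : Submodule ℂ H) : Set H) := by
    have := orth_ker_eq_closure_range_adjoint A ▸ hw
    rwa [← Submodule.topologicalClosure_coe]
  have hcont : Continuous fun v : H => RCLike.re (inner ℂ (M v) v : ℂ) :=
    RCLike.continuous_re.comp (M.continuous.inner continuous_id)
  have hclosedset : IsClosed {v : H | 0 ≤ RCLike.re (inner ℂ (M v) v : ℂ)} :=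
    isClosed_le continuous_const hcont
  have hsubset : ((LinearMap.range (adjoint A : H →L[ℂ] H).toLinearMap : Submodule ℂ H) : Set H) ⊆
      {v : H | 0 ≤ RCLike.re (inner ℂ (M v) v : ℂ)} := by
    rintro v ⟨y, rfl⟩
    have := hrange y
    rwa [star_eq_adjoint] at this
  exact closure_minimal hsubset hclosedset hwcl
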